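/- Let B, N > 0 and u ∈ C([0,T]). With G* and H the solution operators as defined, one has the energy identity ∫₀ᵀ (u - B(B+N⁻¹) G*(H(u))) u dt = ∫₀ᵀ (u - B·H(u))² dt + N⁻¹B ∫₀ᵀ ((G*(H(u)))')² dt + B·(H(u)(T))². In particular the left-hand side is nonnegative. -/

import Mathlib

/-- with `Hu = H(u)` and `A = G*(H(u))`, the energy identity
`∫₀ᵀ (u - B(B+N⁻¹)A) u = ∫₀ᵀ (u - B·Hu)² + N⁻¹B ∫₀ᵀ (A')² + B·Hu(T)²`
holds; in particular the left-hand side is nonnegative. -/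
theorem stmt_15 (T B N : ℝ) (hT : 0 < T) (hB : 0 < B) (hN : 0 < N)
    (u Hu Hu' A A' : ℝ → ℝ)
    (hu : ContinuousOn u (Set.Icc 0 T))
    (hHd : ∀ t ∈ Set.Icc (0:ℝ) T, HasDerivWithinAt Hu (Hu' t) (Set.Icc 0 T) t)
    (hHc : ContinuousOn Hu' (Set.Icc 0 T))
    (hAd : ∀ t ∈ Set.Icc (0:ℝ) T, HasDerivWithinAt A (A' t) (Set.Icc 0 T) t)
    (hAc : ContinuousOn A' (Set.Icc 0 T))
    (hAeq : ∀ t ∈ Set.Icc (0:ℝ) T, -A' t + (B + N⁻¹) * A t = Hu t)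
    (hAT : A T = 0)
    (hHeq : ∀ t ∈ Set.Icc (0:ℝ) T,
      Hu' t + (B + N⁻¹) * Hu t - N⁻¹ * (B + N⁻¹) * A t = u t)
    (hH0 : Hu 0 = 0) :
    (∫ t in (0:ℝ)..T, (u t - B * (B + N⁻¹) * A t) * u t)
      = (∫ t in (0:ℝ)..T, (u t - B * Hu t) ^ 2)
        + N⁻¹ * B * (∫ t in (0:ℝ)..T, (A' t) ^ 2)
        + B * (Hu T) ^ 2
    ∧ 0 ≤ ∫ t in (0:ℝ)..T, (u t - B * (B + N⁻¹) * A t) * u t := by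
  have hIcc : Set.uIcc (0:ℝ) T = Set.Icc 0 T := Set.uIcc_of_le hT.le
  set g : ℝ → ℝ := fun t =>
    (u t - B * (B + N⁻¹) * A t) * u t - (u t - B * Hu t) ^ 2 - N⁻¹ * B * (A' t) ^ 2 with hg
  set Φ : ℝ → ℝ := fun t => -(B * (A' t * Hu t)) with hΦ
  have hHcOn : ContinuousOn Hu (Set.Icc 0 T) :=
    fun t ht => (hHd t ht).continuousWithinAt
  have hAcOn : ContinuousOn A (Set.Icc 0 T) :=
    fun t ht => (hAd t ht).continuousWithinAt
  -- derivative of A'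
  have hA'd : ∀ t ∈ Set.Icc (0:ℝ) T,
      HasDerivWithinAt A' ((B + N⁻¹) * A' t - Hu' t) (Set.Icc 0 T) t := by
    intro t ht
    have h1 : HasDerivWithinAt (fun s => (B + N⁻¹) * A s - Hu s)
        ((B + N⁻¹) * A' t - Hu' t) (Set.Icc 0 T) t :=
      ((hAd t ht).const_mul _).sub (hHd t ht)
    refine h1.congr (fun s hs => ?_) ?_
    · have := hAeq s hs; linarith
    · have := hAeq t ht; linarith
  -- Φ has derivative g within Icc
  have hΦd : ∀ t ∈ Set.Icc (0:ℝ) T, HasDerivWithinAt Φ (g t) (Set.Icc 0 T) t := by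
    intro t ht
    have h1 : HasDerivWithinAt Φ
        (-(B * (((B + N⁻¹) * A' t - Hu' t) * Hu t + A' t * Hu' t)))
        (Set.Icc 0 T) t :=
      (((hA'd t ht).mul (hHd t ht)).const_mul B).neg
    convert h1 using 1
    have ha := hAeq t ht
    have hueq := hHeq t ht
    simp only [hg]
    linear_combination (-(B * (Hu' t + B * Hu t - N⁻¹ * A' t + 2 * N⁻¹ * Hu t
        - N⁻¹ * (B + N⁻¹) * A t))) * ha
      + B * ((B + N⁻¹) * A t - 2 * Hu t) * hueq
  -- FTC
  have hgCont : ContinuousOn g (Set.Icc 0 T) := by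
    apply ContinuousOn.sub
    apply ContinuousOn.sub
    · exact ((hu.sub ((continuousOn_const.mul hAcOn))).mul hu)
    · exact (hu.sub (continuousOn_const.mul hHcOn)).pow 2
    · exact continuousOn_const.mul (hAc.pow 2)
  have hΦcont : ContinuousOn Φ (Set.Icc 0 T) :=
    fun t ht => (hΦd t ht).continuousWithinAt
  have hftc : (∫ t in (0:ℝ)..T, g t) = Φ T - Φ 0 := by
    apply intervalIntegral.integral_eq_sub_of_hasDeriv_right_of_le hT.le hΦcont
    · intro x hx
      exact (hΦd x (Set.mem_Icc.2 ⟨hx.1.le, hx.2.le⟩)).mono_of_mem_nhdsWithin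
        (Icc_mem_nhdsGT_of_mem ⟨hx.1.le, hx.2⟩)
    · exact (hgCont.mono (by rw [hIcc])).intervalIntegrable
  have hA'T : A' T = -(Hu T) := by
    have := hAeq T (Set.mem_Icc.2 ⟨hT.le, le_refl T⟩)
    rw [hAT] at this; linarith
  have hg_val : (∫ t in (0:ℝ)..T, g t) = B * (Hu T) ^ 2 := by
    rw [hftc, hΦ]
    simp only [hH0, hA'T]
    ring
  -- integrability
  have hi1 : IntervalIntegrable (fun t => (u t - B * Hu t) ^ 2) MeasureTheory.volume 0 T :=
    (((hu.sub (continuousOn_const.mul hHcOn)).pow 2).mono (by rw [hIcc])).intervalIntegrable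
  have hi2 : IntervalIntegrable (fun t => (A' t) ^ 2) MeasureTheory.volume 0 T :=
    ((hAc.pow 2).mono (by rw [hIcc])).intervalIntegrable
  have hi3 : IntervalIntegrable g MeasureTheory.volume 0 T :=
    (hgCont.mono (by rw [hIcc])).intervalIntegrable
  have hsplit : (∫ t in (0:ℝ)..T, (u t - B * (B + N⁻¹) * A t) * u t)
      = (∫ t in (0:ℝ)..T, (u t - B * Hu t) ^ 2)
        + N⁻¹ * B * (∫ t in (0:ℝ)..T, (A' t) ^ 2)
        + B * (Hu T) ^ 2 := by
    have : (∫ t in (0:ℝ)..T, (u t - B * (B + N⁻¹) * A t) * u t)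
        = (∫ t in (0:ℝ)..T, ((u t - B * Hu t) ^ 2 + N⁻¹ * B * (A' t) ^ 2 + g t)) := by
      apply intervalIntegral.integral_congr
      intro t _
      simp only [hg]; ring
    rw [this, intervalIntegral.integral_add (hi1.add (hi2.const_mul _)) hi3,
      intervalIntegral.integral_add hi1 (hi2.const_mul _),
      intervalIntegral.integral_const_mul, hg_val]
  refine ⟨hsplit, ?_⟩
  rw [hsplit]
  have h1 : 0 ≤ ∫ t in (0:ℝ)..T, (u t - B * Hu t) ^ 2 :=
    intervalIntegral.integral_nonneg hT.le (fun t _ => sq_nonneg _)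
  have h2 : 0 ≤ ∫ t in (0:ℝ)..T, (A' t) ^ 2 :=
    intervalIntegral.integral_nonneg hT.le (fun t _ => sq_nonneg _)
  have h3 : 0 ≤ B * (Hu T) ^ 2 := by positivity
  have h4 : 0 ≤ N⁻¹ * B := by positivity
  nlinarith
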